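/- Let S be a finite semigroup and c : {(m,n) ∈ ℕ × ℕ | m < n} → S additive. Suppose X ⊆ ℕ is infinite with minimum y₀, all elements of X are such that c(y₀, x) = s for a fixed s ∈ S and all x ∈ X with x > y₀, and all c-values on pairs from X are R-equivalent to s. Then X \ {y₀} is c-homogeneous, with common colour the idempotent of the H-class of s. -/
import Mathlib


/-- Green's R-preorder. -/
def leR {S : Type*} [Semigroup S] (s t : S) : Prop := s = t ∨ ∃ a, s = t * a
/-- Green's L-preorder. -/
def leL {S : Type*} [Semigroup S] (s t : S) : Prop := s = t ∨ ∃ a, s = a * t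
/-- Green's R-equivalence. -/
def eqR {S : Type*} [Semigroup S] (s t : S) : Prop := leR s t ∧ leR t s
/-- Green's H-equivalence. -/
def eqH {S : Type*} [Semigroup S] (s t : S) : Prop :=
  eqR s t ∧ (leL s t ∧ leL t s)

namespace HomAux
variable {S : Type*} [Semigroup S]

def pw (t : S) : ℕ → S
  | 0 => t
  | n+1 => pw t n * t

lemma pw_comm (t : S) (n : ℕ) : t * pw t n = pw t n * t := by
  induction n with
  | zero => rfl
  | succ n ih => show t * (pw t n * t) = _; rw [← mul_assoc, ih]; rfl

lemma pw_add (t : S) (a b : ℕ) : pw t a * pw t b = pw t (a + b + 1) := by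
  induction b with
  | zero => rfl
  | succ b ih => show pw t a * (pw t b * t) = _; rw [← mul_assoc, ih]; rfl

lemma pw_shift (t : S) (i j : ℕ) (h : pw t i = pw t j) (d : ℕ) :
    pw t (i + d) = pw t (j + d) := by
  induction d with
  | zero => simpa using h
  | succ d ih =>
    show pw t (i + d) * t = pw t (j + d) * t
    rw [ih]

lemma pw_period (t : S) (i j : ℕ) (hij : i ≤ j) (h : pw t i = pw t j) :
    ∀ c r, i ≤ r → pw t (r + c * (j - i)) = pw t r := by
  intro c
  induction c with
  | zero => intro r _; simp
  | succ c ih =>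
    intro r hr
    have h1 : r + (c+1) * (j - i) = (r + c * (j-i)) + (j - i) := by ring
    rw [h1]
    have hr' : i ≤ r + c * (j - i) := le_trans hr (Nat.le_add_right _ _)
    have hq : ∀ q, i ≤ q → pw t (q + (j - i)) = pw t q := by
      intro q hiq
      obtain ⟨d, rfl⟩ := Nat.exists_eq_add_of_le hiq
      have h2 : i + d + (j - i) = j + d := by omega
      rw [h2, ← pw_shift t i j h d]
    rw [hq _ hr', ih r hr]

lemma exists_pw_idem [Fintype S] (t : S) : ∃ n, pw t n * pw t n = pw t n := by
  obtain ⟨i, j, hne, heq⟩ := Finite.exists_ne_map_eq_of_infinite (pw t)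
  have main : ∀ i j : ℕ, i < j → pw t i = pw t j → ∃ n, pw t n * pw t n = pw t n := by
    intro i j hij h
    have hp1 : 1 ≤ j - i := by omega
    have hmul : i + 1 ≤ (i+1) * (j - i) := Nat.le_mul_of_pos_right (i+1) (by omega)
    refine ⟨(i+1) * (j - i) - 1, ?_⟩
    rw [pw_add]
    have harith : (i+1)*(j-i) - 1 + ((i+1)*(j-i) - 1) + 1
        = ((i+1)*(j-i) - 1) + (i+1) * (j - i) := by omega
    rw [harith]
    exact pw_period t i j (le_of_lt hij) h (i+1) _ (by omega)
  rcases Ne.lt_or_gt hne with h | h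
  · exact main i j h heq
  · exact main j i h heq.symm

end HomAux

/-- if X is infinite with minimum y₀, c(y₀,x) = s for all x ∈ X above y₀,
and all c-values on pairs from X are R-equivalent to s, then X \ {y₀} is c-homogeneous
with colour the idempotent of the H-class of s. -/
theorem homogeneous_from_Rclass (S : Type*) [Semigroup S] [Fintype S]
    (c : ℕ → ℕ → S)
    (hadd : ∀ x y z : ℕ, x < y → y < z → c x z = c x y * c y z)
    (X : Set ℕ) (hX : X.Infinite) (y₀ : ℕ) (hy₀ : y₀ ∈ X)
    (hmin : ∀ x ∈ X, y₀ ≤ x)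
    (s : S) (hs : ∀ x ∈ X, y₀ < x → c y₀ x = s)
    (hRs : ∀ x ∈ X, ∀ y ∈ X, x < y → eqR (c x y) s) :
    ∃ e : S, e * e = e ∧ eqH e s ∧
      ∀ x ∈ X \ {y₀}, ∀ y ∈ X \ {y₀}, x < y → c x y = e := by
  obtain ⟨n, hne⟩ := HomAux.exists_pw_idem s
  set e := HomAux.pw s n with he
  -- every colour is absorbed by s on the right
  have hcol : ∀ l ∈ X, ∀ m ∈ X, y₀ < l → l < m → s * c l m = s := by
    intro l hl m hm hy hlm
    have h1 := hadd y₀ l m hy hlm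
    rw [hs l hl hy, hs m hm (hy.trans hlm)] at h1
    exact h1.symm
  -- the key algebraic lemma
  have key : ∀ a : S, s * a = s → leR a s → a = e := by
    intro a hsa hle
    rcases hle with h | ⟨u, h⟩ <;> rw [h] at hsa ⊢
    · -- a = s, so s is idempotent and all powers equal s
      have hall : ∀ j, HomAux.pw s j = s := by
        intro j
        induction j with
        | zero => rfl
        | succ j ih => show HomAux.pw s j * s = s; rw [ih, hsa]
      rw [he, hall]
    · -- a = s * u
      have hpwa : ∀ j, HomAux.pw s j * (s * u) = HomAux.pw s j := by
        intro j
        induction j with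
        | zero => exact hsa
        | succ j ih =>
          show HomAux.pw s j * s * (s * u) = HomAux.pw s j * s
          rw [mul_assoc, hsa]
      have hclaim : ∀ j, s * u = HomAux.pw s j * HomAux.pw u j := by
        intro j
        induction j with
        | zero => rfl
        | succ j ih =>
          show s * u = HomAux.pw s j * s * (HomAux.pw u j * u)
          rw [← HomAux.pw_comm s j]
          calc s * u = s * (s * u) * u := by rw [hsa]
            _ = s * ((HomAux.pw s j * HomAux.pw u j) * u) := by
                rw [mul_assoc, ← ih]
            _ = s * HomAux.pw s j * (HomAux.pw u j * u) := by
                rw [← mul_assoc, ← mul_assoc, mul_assoc (s * HomAux.pw s j)]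
      have h2 := hclaim n
      have h3 : e * (s * u) = s * u := by
        rw [h2, ← mul_assoc, he, hne]
      rw [← h3, hpwa n]
  -- hence every colour equals e
  have hcoleq : ∀ l ∈ X, ∀ m ∈ X, y₀ < l → l < m → c l m = e := by
    intro l hl m hm hy hlm
    exact key _ (hcol l hl m hm hy hlm) (hRs l hl m hm hlm).1
  -- pick one actual colour
  obtain ⟨l, hlX, hl⟩ := hX.exists_gt y₀
  obtain ⟨m, hmX, hlm⟩ := hX.exists_gt l
  have hce : c l m = e := hcoleq l hlX m hmX hl hlm
  have heR : eqR e s := hce ▸ hRs l hlX m hmX hlm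
  refine ⟨e, hne, ⟨heR, ?_, ?_⟩, ?_⟩
  · -- leL e s
    cases n with
    | zero => exact Or.inl rfl
    | succ k => exact Or.inr ⟨HomAux.pw s k, rfl⟩
  · -- leL s e
    refine Or.inr ⟨s, ?_⟩
    have := hcol l hlX m hmX hl hlm
    rw [hce] at this
    exact this.symm
  · intro x hx y hy hxy
    have hx' : y₀ < x := lt_of_le_of_ne (hmin x hx.1) (Ne.symm hx.2)
    exact hcoleq x hx.1 y hy.1 hx' hxy
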